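/- Let P_n be the path on vertices v_1, …, v_n (n ≥ 2) and define proper 3-colorings s and t by s(v_i) = ((i−1) mod 3) + 1 and t(v_i) = (i mod 3) + 1. Then every recoloring schedule from s to t using colors {1,2,3} has length at least (n−1)/2. -/

import Mathlib

open SimpleGraph

/-- A proper `m`-coloring: colors in `{1,…,m}`, adjacent vertices get distinct colors. -/
def IsProperColoring {V : Type*} (G : SimpleGraph V) (m : ℕ) (x : V → ℕ) : Prop :=
  (∀ v, x v ∈ Finset.Icc 1 m) ∧ ∀ ⦃u v : V⦄, G.Adj u v → x u ≠ x v

/-- A recoloring schedule from `s` to `t` of length `ℓ` using colors `{1,…,m}`: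
a sequence of proper `m`-colorings `X 0 = s, …, X ℓ = t` such that at each step the set of
vertices that change color is an independent set. -/
def IsRecolorSchedule {V : Type*} (G : SimpleGraph V) (m : ℕ) (s t : V → ℕ)
    (ℓ : ℕ) (X : ℕ → V → ℕ) : Prop :=
  X 0 = s ∧ X ℓ = t ∧ (∀ i ≤ ℓ, IsProperColoring G m (X i)) ∧
  ∀ i, 1 ≤ i → i ≤ ℓ → ∀ ⦃u v : V⦄, G.Adj u v → X (i - 1) u = X i u ∨ X (i - 1) v = X i v

/-- The path on `n` vertices: vertex `a : Fin n` represents `v_{a+1}`, and `v_i` is adjacent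
to `v_{i+1}`. -/
def pathG (n : ℕ) : SimpleGraph (Fin n) where
  Adj a b := a.val + 1 = b.val ∨ b.val + 1 = a.val
  symm := by
    constructor
    rintro a b (h | h)
    · exact Or.inr h
    · exact Or.inl h
  loopless := by
    constructor
    rintro a (h | h) <;> omega

/-- Every 3-recoloring schedule between the colorings `s(v_i) = ((i-1) mod 3) + 1` and
`t(v_i) = (i mod 3) + 1` of the path on `n` vertices has length at least `(n-1)/2`. -/
theorem stmt_7 (n : ℕ) (hn : 2 ≤ n) (ℓ : ℕ) (X : ℕ → Fin n → ℕ)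
    (h : IsRecolorSchedule (pathG n) 3
      (fun a => a.val % 3 + 1) (fun a => (a.val + 1) % 3 + 1) ℓ X) :
    ((n : ℝ) - 1) / 2 ≤ ℓ := by
  obtain ⟨h0, hl, hprop, hstep⟩ := h
  -- Light cone invariant: vertices at distance ≥ i from both ends keep their initial color.
  have inv : ∀ i, i ≤ ℓ → ∀ a : Fin n, i ≤ a.val → a.val + i ≤ n - 1 →
      X i a = a.val % 3 + 1 := by
    intro i
    induction i with
    | zero => intro _ a _ _; rw [h0]
    | succ i ih =>
      intro hi a ha1 ha2
      have hiℓ : i ≤ ℓ := by omega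
      have hlt : a.val - 1 < n := by omega
      have hlt2 : a.val + 1 < n := by omega
      set u : Fin n := ⟨a.val - 1, hlt⟩ with hu
      set w : Fin n := ⟨a.val + 1, hlt2⟩ with hw
      have hadj1 : (pathG n).Adj u a := Or.inl (by simp [hu]; omega)
      have hadj2 : (pathG n).Adj a w := Or.inl (by simp [hw])
      by_cases hch : X (i + 1) a = X i a
      · rw [hch, ih hiℓ a (by omega) (by omega)]
      · have hs1 := hstep (i + 1) (by omega) hi hadj1
        have hs2 := hstep (i + 1) (by omega) hi hadj2
        simp only [Nat.add_sub_cancel] at hs1 hs2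
        have hXu : X i u = X (i + 1) u := by
          rcases hs1 with h' | h'
          · exact h'
          · exact absurd h'.symm hch
        have hXw : X i w = X (i + 1) w := by
          rcases hs2 with h' | h'
          · exact absurd h'.symm hch
          · exact h'
        have hu' : X i u = (a.val - 1) % 3 + 1 := ih hiℓ u (by simp [hu]; omega) (by simp [hu]; omega)
        have hw' : X i w = (a.val + 1) % 3 + 1 := ih hiℓ w (by simp [hw]; omega) (by simp [hw]; omega)
        obtain ⟨hmem, hne⟩ := hprop (i + 1) hi
        have hc := hmem a
        rw [Finset.mem_Icc] at hc
        have hne1 : X (i + 1) u ≠ X (i + 1) a := hne hadj1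
        have hne2 : X (i + 1) a ≠ X (i + 1) w := hne hadj2
        rw [← hXu, hu'] at hne1
        rw [← hXw, hw'] at hne2
        have h1 : (1:ℕ) ≤ a.val := by omega
        omega
  -- The middle vertex gives the lower bound.
  have key : (n - 1) / 2 + 1 ≤ ℓ := by
    by_contra hcon
    push_neg at hcon
    have hℓ : ℓ ≤ (n - 1) / 2 := by omega
    have hmid : (n - 1) / 2 < n := by omega
    set a : Fin n := ⟨(n - 1) / 2, hmid⟩ with ha
    have h1 := inv ℓ le_rfl a (by simp [ha]; omega) (by simp [ha]; omega)
    have h2 : X ℓ a = (a.val + 1) % 3 + 1 := by rw [hl]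
    rw [h1] at h2
    omega
  have h2l : n ≤ 2 * ℓ := by omega
  have : (n : ℝ) ≤ 2 * ℓ := by exact_mod_cast h2l
  linarith
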